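/- Failure of the perturbative bound for the degenerate noise. Fix γ > 0, λ > 0 and an integer ℓ ≥ 1. Let μ be the product standard Gaussian measure on ℝ^{Λ_ℓ}, Λ_ℓ = {−ℓ,…,ℓ}, and for h : ℝ^{Λ_ℓ} → ℝ define D(h) := Σ_{x∈Λ_ℓ} (γ/2)∫(h(ω^x) − h(ω))² dμ + Σ_{x=−ℓ}^{ℓ−1} (λ/2)∫(h(ω^{x,x+1}) − h(ω))² dμ. Then there is NO constant K > 0 such that for every measurable g : ℝ^{Λ_ℓ} → [0,∞) with ∫ g dμ = 1 and ∫ |ω₀² − 1|·(√g − 1)² dμ < ∞ one has ∫ (ω₀² − 1)(√g(ω) − 1)² dμ(ω) ≤ K · D(√g). Equivalently: for every K > 0 there exists such a g (e.g. g = H_n(ω₀)² with H_n a normalized Hermite polynomial of large even degree n) violating the inequality. -/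

import Mathlib

open MeasureTheory ProbabilityTheory

noncomputable section

/-- The finite box `Λ_ℓ = {−ℓ, …, ℓ}` as an index type. -/
abbrev Idx (l : ℤ) : Type := {z : ℤ // z ∈ Finset.Icc (-l) l}

/-- The product standard Gaussian measure on `ℝ^{Λ_ℓ}`. -/
def gaussBox (l : ℤ) : Measure (Idx l → ℝ) :=
  Measure.pi fun _ : Idx l => gaussianReal 0 1

/-- The Dirichlet form
`D(h) = Σ_{x∈Λ_ℓ} (γ/2)∫(h(ω^x) − h(ω))² dμ + Σ_{x=−ℓ}^{ℓ−1} (λ/2)∫(h(ω^{x,x+1}) − h(ω))² dμ`. -/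
def DirichletForm (gam lam : ℝ) (l : ℤ) (h : (Idx l → ℝ) → ℝ) : ℝ :=
  (∑ x : Idx l,
    gam / 2 * ∫ ω, (h (Function.update ω x (-(ω x))) - h ω) ^ 2 ∂(gaussBox l))
  + ∑ x ∈ (Finset.Icc (-l) (l - 1)).attach,
      lam / 2 * ∫ ω, (h (fun i => ω (Equiv.swap
          (⟨x.1, by have hx := x.2; simp only [Finset.mem_Icc] at hx ⊢; omega⟩ : Idx l)
          (⟨x.1 + 1, by have hx := x.2; simp only [Finset.mem_Icc] at hx ⊢; omega⟩ : Idx l) i))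
        - h ω) ^ 2 ∂(gaussBox l)




section AuxStmt18

open Real

lemma integrable_pow_gauss (n : ℕ) :
    Integrable (fun x : ℝ => x ^ n * Real.exp (-x ^ 2 / 2)) := by
  have h1 : Integrable (fun x : ℝ => Real.exp (-(1/2 : ℝ) * x ^ 2)) :=
    integrable_exp_neg_mul_sq (by norm_num)
  have h2 : Integrable (fun x : ℝ => Real.exp (x - x ^ 2 / 2)) := by
    have := (h1.comp_sub_right 1).const_mul (Real.exp (1/2))
    refine this.congr (Filter.Eventually.of_forall fun x => ?_)
    show Real.exp (1/2) * Real.exp _ = _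
    rw [← Real.exp_add]; congr 1; ring
  have h3 : Integrable (fun x : ℝ => Real.exp (-x - x ^ 2 / 2)) := by
    have := (h1.comp_add_right 1).const_mul (Real.exp (1/2))
    refine this.congr (Filter.Eventually.of_forall fun x => ?_)
    show Real.exp (1/2) * Real.exp _ = _
    rw [← Real.exp_add]; congr 1; ring
  refine Integrable.mono' (((h2.add h3)).const_mul ((Nat.factorial n : ℝ))) ?_
    (Filter.Eventually.of_forall fun x => ?_)
  · exact ((continuous_pow n).mul (by fun_prop)).aestronglyMeasurable
  · have hb : |x| ^ n ≤ (Nat.factorial n : ℝ) * Real.exp |x| := by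
      have h := Real.pow_div_factorial_le_exp (x := |x|) (abs_nonneg x) n
      rw [div_le_iff₀ (by positivity : (0:ℝ) < (Nat.factorial n : ℝ))] at h
      linarith [h]
    have habs : Real.exp |x| ≤ Real.exp x + Real.exp (-x) := by
      rcases abs_cases x with ⟨h, _⟩ | ⟨h, _⟩ <;> rw [h] <;>
        [linarith [Real.exp_pos (-x)]; linarith [Real.exp_pos x]]
    have hexp : (0:ℝ) < Real.exp (-x ^ 2 / 2) := Real.exp_pos _
    calc ‖x ^ n * Real.exp (-x ^ 2 / 2)‖ = |x| ^ n * Real.exp (-x ^ 2 / 2) := by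
          rw [norm_mul, norm_pow, Real.norm_eq_abs, Real.norm_eq_abs,
            abs_of_pos hexp]
      _ ≤ ((Nat.factorial n : ℝ) * Real.exp |x|) * Real.exp (-x ^ 2 / 2) := by
          apply mul_le_mul_of_nonneg_right hb hexp.le
      _ ≤ (Nat.factorial n : ℝ) * ((fun x => Real.exp (x - x ^ 2 / 2)) + fun x => Real.exp (-x - x ^ 2 / 2)) x := by
          simp only [Pi.add_apply]
          rw [mul_assoc, ← Real.exp_add]
          have : Real.exp (|x| + -x ^ 2 / 2) ≤ Real.exp (x + -x ^ 2 / 2) + Real.exp (-x + -x ^ 2/2) := by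
            rcases abs_cases x with ⟨h, _⟩ | ⟨h, _⟩ <;> rw [h] <;>
              [linarith [Real.exp_pos (-x + -x^2/2)]; linarith [Real.exp_pos (x + -x^2/2)]]
          have h2 : Real.exp (x + -x^2/2) = Real.exp (x - x^2/2) := by congr 1; ring
          have h3 : Real.exp (-x + -x^2/2) = Real.exp (-x - x^2/2) := by congr 1; ring
          rw [h2, h3] at this
          exact mul_le_mul_of_nonneg_left this (by positivity)

lemma J_rec (n : ℕ) :
    ∫ x : ℝ, x ^ (n + 2) * Real.exp (-x ^ 2 / 2)
      = (n + 1 : ℝ) * ∫ x : ℝ, x ^ n * Real.exp (-x ^ 2 / 2) := by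
  have hu : ∀ x : ℝ, HasDerivAt (fun y : ℝ => y ^ (n+1)) ((n+1 : ℝ) * x ^ n) x := by
    intro x
    simpa using hasDerivAt_pow (n+1) x
  have hv : ∀ x : ℝ, HasDerivAt (fun y : ℝ => Real.exp (-y ^ 2 / 2))
      (-x * Real.exp (-x ^ 2 / 2)) x := by
    intro x
    have h : HasDerivAt (fun y : ℝ => -y ^ 2 / 2) (-x) x := by
      have := (hasDerivAt_pow 2 x).neg.div_const 2
      simpa using this.congr_deriv (by ring)
    simpa [mul_comm] using h.exp
  have huv' : Integrable ((fun y : ℝ => y ^ (n+1)) * (fun x : ℝ => -x * Real.exp (-x ^ 2 / 2))) := by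
    refine ((integrable_pow_gauss (n+2)).neg).congr (Filter.Eventually.of_forall fun x => ?_)
    simp only [Pi.mul_apply, Pi.neg_apply]; ring
  have hu'v : Integrable ((fun x : ℝ => (n+1 : ℝ) * x ^ n) * (fun y : ℝ => Real.exp (-y ^ 2 / 2))) := by
    refine ((integrable_pow_gauss n).const_mul (n+1)).congr (Filter.Eventually.of_forall fun x => ?_)
    simp only [Pi.mul_apply]; ring
  have huv : Integrable ((fun y : ℝ => y ^ (n+1)) * (fun y : ℝ => Real.exp (-y ^ 2 / 2))) := by
    refine (integrable_pow_gauss (n+1)).congr (Filter.Eventually.of_forall fun x => ?_)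
    simp only [Pi.mul_apply]
  have := MeasureTheory.integral_mul_deriv_eq_deriv_mul_of_integrable (fun x _ => hu x) (fun x _ => hv x) huv' hu'v huv
  have e1 : ∫ x : ℝ, x ^ (n+1) * (-x * Real.exp (-x ^ 2 / 2))
      = -∫ x : ℝ, x ^ (n+2) * Real.exp (-x ^ 2 / 2) := by
    rw [← integral_neg]; congr 1; funext x; ring
  have e2 : ∫ x : ℝ, (n+1 : ℝ) * x ^ n * Real.exp (-x ^ 2 / 2)
      = (n+1 : ℝ) * ∫ x : ℝ, x ^ n * Real.exp (-x ^ 2 / 2) := by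
    rw [← MeasureTheory.integral_const_mul]; congr 1; funext x; ring
  rw [e1, e2] at this
  linarith [this]

lemma J_zero : ∫ x : ℝ, x ^ 0 * Real.exp (-x ^ 2 / 2) = Real.sqrt (2 * π) := by
  have : ∀ x : ℝ, x ^ 0 * Real.exp (-x ^ 2 / 2) = Real.exp (-(1/2 : ℝ) * x ^ 2) := by
    intro x; rw [pow_zero, one_mul]; congr 1; ring
  simp_rw [this, integral_gaussian]
  congr 1
  rw [div_div_eq_mul_div]
  norm_num [mul_comm]

/-- density as ℝ≥0 -/
def gdens (x : ℝ) : NNReal := Real.toNNReal ((Real.sqrt (2 * π))⁻¹ * Real.exp (-x ^ 2 / 2))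

lemma gdens_meas : Measurable gdens := by
  apply Measurable.real_toNNReal
  fun_prop

lemma gaussianReal_eq_withDensity :
    gaussianReal 0 1 = MeasureTheory.volume.withDensity (fun x => (gdens x : ENNReal)) := by
  rw [gaussianReal_of_var_ne_zero 0 one_ne_zero]
  congr 1
  funext x
  rw [gaussianPDF]
  simp only [gdens, ENNReal.ofReal]
  congr 1
  rw [gaussianPDFReal]
  norm_num

lemma integral_gauss1 (f : ℝ → ℝ) :
    ∫ x, f x ∂(gaussianReal 0 1)
      = (Real.sqrt (2 * π))⁻¹ * ∫ x : ℝ, f x * Real.exp (-x ^ 2 / 2) := by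
  rw [gaussianReal_eq_withDensity, integral_withDensity_eq_integral_smul gdens_meas]
  rw [← MeasureTheory.integral_const_mul]
  congr 1
  funext x
  have h0 : (0:ℝ) ≤ (Real.sqrt (2 * π))⁻¹ * Real.exp (-x ^ 2 / 2) := by positivity
  simp only [gdens, NNReal.smul_def, Real.coe_toNNReal _ h0, smul_eq_mul]
  ring

lemma integrable_gauss1 {f : ℝ → ℝ}
    (hf : Integrable (fun x : ℝ => f x * Real.exp (-x ^ 2 / 2))) :
    Integrable f (gaussianReal 0 1) := by
  rw [gaussianReal_eq_withDensity, integrable_withDensity_iff_integrable_smul gdens_meas]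
  refine (hf.const_mul ((Real.sqrt (2 * π))⁻¹)).congr (Filter.Eventually.of_forall fun x => ?_)
  have h0 : (0:ℝ) ≤ (Real.sqrt (2 * π))⁻¹ * Real.exp (-x ^ 2 / 2) := by positivity
  simp only [gdens, NNReal.smul_def, Real.coe_toNNReal _ h0, smul_eq_mul]
  ring


lemma integrable_pow_gauss1 (n : ℕ) :
    Integrable (fun x : ℝ => x ^ n) (gaussianReal 0 1) :=
  integrable_gauss1 (integrable_pow_gauss n)

lemma sqrt_two_pi_pos : (0:ℝ) < Real.sqrt (2 * π) :=
  Real.sqrt_pos.2 (by positivity)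

lemma moment_pow (n : ℕ) : ∫ x, x ^ n ∂(gaussianReal 0 1)
    = (Real.sqrt (2 * π))⁻¹ * ∫ x : ℝ, x ^ n * Real.exp (-x ^ 2 / 2) :=
  integral_gauss1 _

lemma moment0 : ∫ x, x ^ 0 ∂(gaussianReal 0 1) = 1 := by
  rw [moment_pow, J_zero, inv_mul_cancel₀ sqrt_two_pi_pos.ne']

lemma moment2 : ∫ x, x ^ 2 ∂(gaussianReal 0 1) = 1 := by
  rw [moment_pow, show (2:ℕ) = 0 + 2 from rfl, J_rec, J_zero]
  field_simp
  simp

lemma J_two : ∫ x : ℝ, x ^ 2 * Real.exp (-x ^ 2 / 2)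
    = (((0:ℕ):ℝ) + 1) * ∫ x : ℝ, x ^ 0 * Real.exp (-x ^ 2 / 2) := J_rec 0

lemma J_four : ∫ x : ℝ, x ^ 4 * Real.exp (-x ^ 2 / 2)
    = (((2:ℕ):ℝ) + 1) * ∫ x : ℝ, x ^ 2 * Real.exp (-x ^ 2 / 2) := J_rec 2

lemma moment4 : ∫ x, x ^ 4 ∂(gaussianReal 0 1) = 3 := by
  rw [moment_pow, J_four, J_two, J_zero]
  have := sqrt_two_pi_pos
  field_simp
  ring

lemma moment6 : ∫ x, x ^ 6 ∂(gaussianReal 0 1) = 15 := by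
  rw [moment_pow, show (6:ℕ) = 4 + 2 from rfl, J_rec, J_four, J_two, J_zero]
  have := sqrt_two_pi_pos
  field_simp
  ring

def G : Type := ℝ
instance : MeasureSpace G :=
  { toMeasurableSpace := (inferInstance : MeasurableSpace ℝ), volume := gaussianReal 0 1 }
instance : SigmaFinite (volume : Measure G) :=
  inferInstanceAs (SigmaFinite (gaussianReal 0 1))

lemma integral_box {l : ℤ} (f : Idx l → ℝ → ℝ) :
    ∫ ω, ∏ x, f x (ω x) ∂(gaussBox l) = ∏ x, ∫ t, f x t ∂(gaussianReal 0 1) :=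
  MeasureTheory.integral_fintype_prod_eq_prod (𝕜 := ℝ) (E := fun _ => ℝ)
    (fun x (t : ℝ) => f x t) (μ := fun _ => gaussianReal 0 1)

lemma integrable_box {l : ℤ} {f : Idx l → ℝ → ℝ}
    (hf : ∀ x, Integrable (f x) (gaussianReal 0 1)) :
    Integrable (fun ω => ∏ x, f x (ω x)) (gaussBox l) :=
  MeasureTheory.Integrable.fintype_prod (𝕜 := ℝ) (E := ℝ) (f := fun x (t : ℝ) => f x t)
    (μ := fun _ => gaussianReal 0 1) hf

/-! ### the counterexample density -/

def cst : ℝ := Real.sqrt 3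

lemma cst_gt_one : 1 < cst := by
  rw [cst, show (1:ℝ) = Real.sqrt 1 by simp]
  exact Real.sqrt_lt_sqrt (by norm_num) (by norm_num)

lemma cst_pos : 0 < cst := lt_trans one_pos cst_gt_one

lemma cst_sq : cst ^ 2 = 3 := Real.sq_sqrt (by norm_num)

/-- `u ω = ∏ₓ ωₓ²/√3` -/
def ufun (l : ℤ) (ω : Idx l → ℝ) : ℝ := ∏ x, (ω x) ^ 2 / cst

/-- the density `g = u²` -/
def gfun (l : ℤ) (ω : Idx l → ℝ) : ℝ := (ufun l ω) ^ 2

lemma ufun_nonneg (l : ℤ) (ω : Idx l → ℝ) : 0 ≤ ufun l ω :=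
  Finset.prod_nonneg fun x _ => div_nonneg (sq_nonneg _) cst_pos.le

lemma sqrt_gfun (l : ℤ) (ω : Idx l → ℝ) : Real.sqrt (gfun l ω) = ufun l ω :=
  Real.sqrt_sq (ufun_nonneg l ω)

lemma gfun_meas (l : ℤ) : Measurable (gfun l) := by
  apply Measurable.pow_const
  exact Finset.measurable_prod _ fun x _ =>
    (by fun_prop)

lemma gfun_nonneg (l : ℤ) (ω : Idx l → ℝ) : 0 ≤ gfun l ω := sq_nonneg _

lemma ufun_update (l : ℤ) (x : Idx l) (ω : Idx l → ℝ) :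
    ufun l (Function.update ω x (-(ω x))) = ufun l ω := by
  refine Finset.prod_congr rfl fun y _ => ?_
  rcases eq_or_ne y x with rfl | h
  · rw [Function.update_self]; ring_nf
  · rw [Function.update_of_ne h]

lemma ufun_swap (l : ℤ) (a b : Idx l) (ω : Idx l → ℝ) :
    ufun l (fun i => ω (Equiv.swap a b i)) = ufun l ω :=
  Equiv.prod_comp (Equiv.swap a b) (fun i => (ω i) ^ 2 / cst)

lemma dirichlet_zero (gam lam : ℝ) (l : ℤ) :
    DirichletForm gam lam l (fun ω => Real.sqrt (gfun l ω)) = 0 := by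
  rw [DirichletForm]
  have hsum1 : ∀ x : Idx l,
      gam / 2 * ∫ ω, (Real.sqrt (gfun l (Function.update ω x (-(ω x))))
        - Real.sqrt (gfun l ω)) ^ 2 ∂(gaussBox l) = 0 := by
    intro x
    have : (fun ω : Idx l → ℝ => (Real.sqrt (gfun l (Function.update ω x (-(ω x))))
        - Real.sqrt (gfun l ω)) ^ 2) = fun _ => 0 := by
      funext ω
      rw [sqrt_gfun, sqrt_gfun, ufun_update]
      ring
    rw [this, integral_zero, mul_zero]
  rw [Finset.sum_congr rfl fun x _ => hsum1 x, Finset.sum_const, smul_zero, zero_add]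
  refine Finset.sum_eq_zero fun x hx => ?_
  have : (fun ω : Idx l → ℝ => (Real.sqrt (gfun l (fun i => ω (Equiv.swap
      (⟨x.1, by have hx := x.2; simp only [Finset.mem_Icc] at hx ⊢; omega⟩ : Idx l)
      (⟨x.1 + 1, by have hx := x.2; simp only [Finset.mem_Icc] at hx ⊢; omega⟩ : Idx l) i)))
      - Real.sqrt (gfun l ω)) ^ 2) = fun _ => 0 := by
    funext ω
    rw [sqrt_gfun, sqrt_gfun, ufun_swap]
    ring
  rw [this, integral_zero, mul_zero]

/-! single-site integrals -/

lemma eq_b1 : (fun t : ℝ => (t ^ 2 / cst) ^ 2) = fun t : ℝ => t ^ 4 / 3 := by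
  funext t
  rw [div_pow, ← pow_mul, cst_sq]

lemma i_b1 : Integrable (fun t : ℝ => (t ^ 2 / cst) ^ 2) (gaussianReal 0 1) := by
  rw [eq_b1]; exact (integrable_pow_gauss1 4).div_const 3

lemma int_b1 : ∫ t, (t ^ 2 / cst) ^ 2 ∂(gaussianReal 0 1) = 1 := by
  rw [eq_b1, integral_div, moment4]; norm_num

lemma eq_ab1 : (fun t : ℝ => (t ^ 2 - 1) * (t ^ 2 / cst) ^ 2)
    = fun t : ℝ => t ^ 6 / 3 - t ^ 4 / 3 := by
  funext t
  have h : (t ^ 2 / cst) ^ 2 = t ^ 4 / 3 := by rw [div_pow, ← pow_mul, cst_sq]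
  rw [h]; ring

lemma i_ab1 : Integrable (fun t : ℝ => (t ^ 2 - 1) * (t ^ 2 / cst) ^ 2) (gaussianReal 0 1) := by
  rw [eq_ab1]
  exact ((integrable_pow_gauss1 6).div_const 3).sub ((integrable_pow_gauss1 4).div_const 3)

lemma int_ab1 : ∫ t, (t ^ 2 - 1) * (t ^ 2 / cst) ^ 2 ∂(gaussianReal 0 1) = 4 := by
  rw [eq_ab1, integral_sub ((integrable_pow_gauss1 6).div_const 3)
    ((integrable_pow_gauss1 4).div_const 3), integral_div, integral_div, moment4, moment6]
  norm_num

lemma i_b2 : Integrable (fun t : ℝ => t ^ 2 / cst) (gaussianReal 0 1) :=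
  (integrable_pow_gauss1 2).div_const cst

lemma int_b2 : ∫ t, t ^ 2 / cst ∂(gaussianReal 0 1) = 1 / cst := by
  rw [integral_div, moment2]

lemma eq_ab2 : (fun t : ℝ => (t ^ 2 - 1) * (t ^ 2 / cst))
    = fun t : ℝ => t ^ 4 / cst - t ^ 2 / cst := by
  funext t; ring

lemma i_ab2 : Integrable (fun t : ℝ => (t ^ 2 - 1) * (t ^ 2 / cst)) (gaussianReal 0 1) := by
  rw [eq_ab2]
  exact ((integrable_pow_gauss1 4).div_const cst).sub ((integrable_pow_gauss1 2).div_const cst)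

lemma int_ab2 : ∫ t, (t ^ 2 - 1) * (t ^ 2 / cst) ∂(gaussianReal 0 1) = 2 / cst := by
  rw [eq_ab2, integral_sub ((integrable_pow_gauss1 4).div_const cst)
    ((integrable_pow_gauss1 2).div_const cst), integral_div, integral_div, moment2, moment4]
  ring

lemma i_one : Integrable (fun _ : ℝ => (1:ℝ)) (gaussianReal 0 1) := integrable_const 1

lemma int_one : ∫ _t, (1:ℝ) ∂(gaussianReal 0 1) = 1 := by
  simpa using moment0

lemma i_a : Integrable (fun t : ℝ => t ^ 2 - 1) (gaussianReal 0 1) :=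
  (integrable_pow_gauss1 2).sub i_one

lemma int_a : ∫ t, (t ^ 2 - 1) ∂(gaussianReal 0 1) = 0 := by
  rw [integral_sub (integrable_pow_gauss1 2) i_one, moment2, int_one]
  norm_num

lemma i_a1 : Integrable (fun t : ℝ => (t ^ 2 - 1) * 1) (gaussianReal 0 1) := by
  simpa using i_a

lemma int_a1 : ∫ t, (t ^ 2 - 1) * 1 ∂(gaussianReal 0 1) = 0 := by
  simpa using int_a

lemma i_absa : Integrable (fun t : ℝ => |t ^ 2 - 1|) (gaussianReal 0 1) := i_a.abs

lemma i_absab1 : Integrable (fun t : ℝ => |t ^ 2 - 1| * (t ^ 2 / cst) ^ 2) (gaussianReal 0 1) := by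
  refine i_ab1.abs.congr (Filter.Eventually.of_forall fun t => ?_)
  show |(t ^ 2 - 1) * (t ^ 2 / cst) ^ 2| = _
  rw [abs_mul, abs_of_nonneg (by positivity : (0:ℝ) ≤ (t ^ 2 / cst) ^ 2)]

lemma i_absa1 : Integrable (fun t : ℝ => |t ^ 2 - 1| * 1) (gaussianReal 0 1) := by
  simpa using i_absa

/-! ### family machinery -/

/-- family of one-site functions: the special factor `a` at site `x0`, common factor `b`. -/
def famF (l : ℤ) (x0 : Idx l) (a b : ℝ → ℝ) : Idx l → ℝ → ℝ :=
  fun x t => (if x = x0 then a t else 1) * b t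

lemma fam_integrable {l : ℤ} (x0 : Idx l) {a b : ℝ → ℝ}
    (hab : Integrable (fun t => a t * b t) (gaussianReal 0 1))
    (hb : Integrable b (gaussianReal 0 1)) :
    ∀ x, Integrable (famF l x0 a b x) (gaussianReal 0 1) := by
  intro x
  by_cases h : x = x0
  · refine hab.congr (Filter.Eventually.of_forall fun t => ?_); simp [famF, h]
  · refine hb.congr (Filter.Eventually.of_forall fun t => ?_); simp [famF, h]

lemma fam_prod {l : ℤ} (x0 : Idx l) (a b : ℝ → ℝ) (ω : Idx l → ℝ) :
    ∏ x, famF l x0 a b x (ω x) = a (ω x0) * ∏ x, b (ω x) := by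
  simp only [famF]
  rw [Finset.prod_mul_distrib]
  congr 1
  rw [Finset.prod_ite_eq' Finset.univ x0 (fun x => a (ω x))]
  simp

lemma fam_integral {l : ℤ} (x0 : Idx l) {a b : ℝ → ℝ} {A B : ℝ}
    (hA : ∫ t, a t * b t ∂(gaussianReal 0 1) = A)
    (hB : ∫ t, b t ∂(gaussianReal 0 1) = B) :
    ∫ ω, ∏ x, famF l x0 a b x (ω x) ∂(gaussBox l)
      = A * B ^ ((Finset.univ.erase x0).card) := by
  rw [integral_box]
  have h1 : ∀ x : Idx l, ∫ t, famF l x0 a b x t ∂(gaussianReal 0 1)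
      = if x = x0 then A else B := by
    intro x
    by_cases h : x = x0
    · rw [if_pos h, ← hA]
      congr 1; funext t; simp [famF, h]
    · rw [if_neg h, ← hB]
      congr 1; funext t; simp [famF, h]
  rw [Finset.prod_congr rfl fun x _ => h1 x,
    ← Finset.mul_prod_erase Finset.univ _ (Finset.mem_univ x0), if_pos rfl]
  congr 1
  rw [Finset.prod_congr rfl fun x hx => if_neg (Finset.ne_of_mem_erase hx),
    Finset.prod_const]

/-! ### the three product representations -/

variable {l : ℤ}

lemma prod_b1 (ω : Idx l → ℝ) : ∏ x, ((ω x) ^ 2 / cst) ^ 2 = (ufun l ω) ^ 2 := by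
  rw [ufun, Finset.prod_pow]

lemma main_identity (x0 : Idx l) (ω : Idx l → ℝ) :
    ((ω x0) ^ 2 - 1) * (Real.sqrt (gfun l ω) - 1) ^ 2
      = (∏ x, famF l x0 (fun t => t ^ 2 - 1) (fun t => (t ^ 2 / cst) ^ 2) x (ω x))
        - 2 * (∏ x, famF l x0 (fun t => t ^ 2 - 1) (fun t => t ^ 2 / cst) x (ω x))
        + (∏ x, famF l x0 (fun t => t ^ 2 - 1) (fun _ => (1:ℝ)) x (ω x)) := by
  rw [sqrt_gfun, fam_prod, fam_prod, fam_prod, prod_b1]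
  have h2 : ∏ x : Idx l, (ω x) ^ 2 / cst = ufun l ω := rfl
  rw [h2]
  simp only [Finset.prod_const_one]
  ring

lemma abs_identity (x0 : Idx l) (ω : Idx l → ℝ) :
    |(ω x0) ^ 2 - 1| * (Real.sqrt (gfun l ω) - 1) ^ 2
      ≤ 2 * ((∏ x, famF l x0 (fun t => |t ^ 2 - 1|) (fun t => (t ^ 2 / cst) ^ 2) x (ω x))
        + (∏ x, famF l x0 (fun t => |t ^ 2 - 1|) (fun _ => (1:ℝ)) x (ω x))) := by
  rw [sqrt_gfun, fam_prod, fam_prod, prod_b1]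
  simp only [Finset.prod_const_one, mul_one]
  have h1 : (ufun l ω - 1) ^ 2 ≤ 2 * (ufun l ω) ^ 2 + 2 := by nlinarith [sq_nonneg (ufun l ω + 1)]
  have h0 : (0:ℝ) ≤ |(ω x0) ^ 2 - 1| := abs_nonneg _
  nlinarith [mul_le_mul_of_nonneg_left h1 h0]

/-! ### properties of the density -/

lemma gfun_prod (ω : Idx l → ℝ) : gfun l ω = ∏ x, ((ω x) ^ 2 / cst) ^ 2 := by
  rw [prod_b1, gfun]

lemma gfun_int : ∫ ω, gfun l ω ∂(gaussBox l) = 1 := by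
  have : (fun ω : Idx l → ℝ => gfun l ω) = fun ω => ∏ x, ((ω x) ^ 2 / cst) ^ 2 := by
    funext ω; exact gfun_prod ω
  rw [this]
  refine (integral_box (l := l) (fun _ t => (t ^ 2 / cst) ^ 2)).trans ?_
  rw [Finset.prod_congr rfl fun x _ => int_b1, Finset.prod_const, one_pow]

end AuxStmt18

/-- failure of the perturbative bound for the degenerate noise:
there is no constant `K > 0` such that for every probability density `g ≥ 0`
(with the displayed integrability), `∫ (ω₀² − 1)(√g − 1)² dμ ≤ K·D(√g)`. -/
theorem stmt18 (gam lam : ℝ) (hgam : 0 < gam) (hlam : 0 < lam)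
    (l : ℤ) (hl : 1 ≤ l) :
    ¬ ∃ K : ℝ, 0 < K ∧
      ∀ g : (Idx l → ℝ) → ℝ, Measurable g → (∀ ω, 0 ≤ g ω) →
        (∫ ω, g ω ∂(gaussBox l)) = 1 →
        Integrable (fun ω => |(ω (⟨0, by simp only [Finset.mem_Icc]; omega⟩ : Idx l)) ^ 2 - 1|
            * (Real.sqrt (g ω) - 1) ^ 2) (gaussBox l) →
        (∫ ω, ((ω (⟨0, by simp only [Finset.mem_Icc]; omega⟩ : Idx l)) ^ 2 - 1)
            * (Real.sqrt (g ω) - 1) ^ 2 ∂(gaussBox l))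
          ≤ K * DirichletForm gam lam l (fun ω => Real.sqrt (g ω)) := by
  rintro ⟨K, hK, H⟩
  set x0 : Idx l := ⟨0, by simp only [Finset.mem_Icc]; omega⟩ with hx0
  -- the counterexample density
  have hQ1 : Integrable (fun ω => ∏ x, famF l x0 (fun t => |t ^ 2 - 1|)
      (fun t => (t ^ 2 / cst) ^ 2) x (ω x)) (gaussBox l) :=
    integrable_box (fam_integrable x0 i_absab1 i_b1)
  have hQ3 : Integrable (fun ω => ∏ x, famF l x0 (fun t => |t ^ 2 - 1|)
      (fun _ => (1:ℝ)) x (ω x)) (gaussBox l) :=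
    integrable_box (fam_integrable x0 i_absa1 i_one)
  have hintabs : Integrable (fun ω => |(ω x0) ^ 2 - 1|
      * (Real.sqrt (gfun l ω) - 1) ^ 2) (gaussBox l) := by
    refine Integrable.mono' ((hQ1.add hQ3).const_mul 2) ?_
      (Filter.Eventually.of_forall fun ω => ?_)
    · refine (Measurable.aestronglyMeasurable ?_)
      have h1 : Measurable fun ω : Idx l → ℝ => |(ω x0) ^ 2 - 1| :=
        (((measurable_pi_apply x0).pow_const 2).sub measurable_const).abs
      have h2 : Measurable fun ω : Idx l → ℝ => (Real.sqrt (gfun l ω) - 1) ^ 2 :=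
        (((gfun_meas l).sqrt).sub measurable_const).pow_const 2
      exact h1.mul h2
    · rw [Real.norm_eq_abs, abs_of_nonneg (mul_nonneg (abs_nonneg _) (sq_nonneg _))]
      exact abs_identity x0 ω
  -- value of the main integral
  set k := (Finset.univ.erase x0).card with hk
  have hP1 : Integrable (fun ω => ∏ x, famF l x0 (fun t => t ^ 2 - 1)
      (fun t => (t ^ 2 / cst) ^ 2) x (ω x)) (gaussBox l) :=
    integrable_box (fam_integrable x0 i_ab1 i_b1)
  have hP2 : Integrable (fun ω => ∏ x, famF l x0 (fun t => t ^ 2 - 1)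
      (fun t => t ^ 2 / cst) x (ω x)) (gaussBox l) :=
    integrable_box (fam_integrable x0 i_ab2 i_b2)
  have hP3 : Integrable (fun ω => ∏ x, famF l x0 (fun t => t ^ 2 - 1)
      (fun _ => (1:ℝ)) x (ω x)) (gaussBox l) :=
    integrable_box (fam_integrable x0 i_a1 i_one)
  have hval : ∫ ω, ((ω x0) ^ 2 - 1) * (Real.sqrt (gfun l ω) - 1) ^ 2 ∂(gaussBox l)
      = 4 * 1 ^ k - 2 * (2 / cst * (1 / cst) ^ k) + 0 * 1 ^ k := by
    rw [show (fun ω : Idx l → ℝ => ((ω x0) ^ 2 - 1) * (Real.sqrt (gfun l ω) - 1) ^ 2)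
        = fun ω => ((∏ x, famF l x0 (fun t => t ^ 2 - 1) (fun t => (t ^ 2 / cst) ^ 2) x (ω x))
          - 2 * (∏ x, famF l x0 (fun t => t ^ 2 - 1) (fun t => t ^ 2 / cst) x (ω x)))
          + (∏ x, famF l x0 (fun t => t ^ 2 - 1) (fun _ => (1:ℝ)) x (ω x))
      from funext fun ω => by rw [main_identity x0 ω]]
    have hsub : Integrable (fun ω : Idx l → ℝ =>
        (∏ x, famF l x0 (fun t => t ^ 2 - 1) (fun t => (t ^ 2 / cst) ^ 2) x (ω x))
          - 2 * (∏ x, famF l x0 (fun t => t ^ 2 - 1) (fun t => t ^ 2 / cst) x (ω x)))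
        (gaussBox l) := hP1.sub (hP2.const_mul 2)
    rw [integral_add hsub hP3,
      integral_sub hP1 (hP2.const_mul 2), MeasureTheory.integral_const_mul,
      fam_integral x0 int_ab1 int_b1, fam_integral x0 int_ab2 int_b2,
      fam_integral x0 int_a1 int_one]
  have hpos : 0 < ∫ ω, ((ω x0) ^ 2 - 1) * (Real.sqrt (gfun l ω) - 1) ^ 2 ∂(gaussBox l) := by
    rw [hval]
    have hc := cst_gt_one
    have hc0 := cst_pos
    have h1 : (1 / cst) ^ k ≤ 1 :=
      pow_le_one₀ (by positivity) (by rw [div_le_one hc0]; linarith)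
    have h0 : (0:ℝ) ≤ (1 / cst) ^ k := by positivity
    have h2 : 2 / cst * (1 / cst) ^ k ≤ 2 / cst * 1 :=
      mul_le_mul_of_nonneg_left h1 (by positivity)
    have h3 : 2 / cst < 2 := by
      rw [div_lt_iff₀ hc0]; linarith
    simp only [one_pow, mul_one, zero_mul, add_zero] at *
    linarith
  have := H (gfun l) (gfun_meas l) (fun ω => sq_nonneg _) gfun_int hintabs
  rw [dirichlet_zero gam lam l, mul_zero] at this
  exact absurd this (not_le.2 hpos)


end
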